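/- Let c ≥ 2 and 0 ≤ d ≤ c be integers, set e = c−d+1, and let S be a polynomial ring over k in c+d+1 variables. If I and J are homogeneous ideals of S that both have KW type ((1,1,…,1); (e)), with d parts equal to 1 in the first partition and a single part e in the second, then there exists a k-algebra automorphism φ of S mapping the space of homogeneous linear forms bijectively onto itself such that φ(I) = J. -/

import Mathlib

open MvPolynomial

/-- Variables of the canonical Kronecker–Weierstrass concatenation: the `i`-th scroll
block of size `lam i` uses the `lam i + 1` variables `Sum.inl ⟨i, ·⟩`, and the `i`-th
Jordan block of size `mu i` uses the `mu i` variables `Sum.inr ⟨i, ·⟩`. -/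
abbrev KWVars {d e : ℕ} (lam : Fin d → ℕ) (mu : Fin e → ℕ) : Type :=
  (Σ i : Fin d, Fin (lam i + 1)) ⊕ (Σ i : Fin e, Fin (mu i))

/-- Columns of the canonical Kronecker–Weierstrass concatenation. -/
abbrev KWCols {d e : ℕ} (lam : Fin d → ℕ) (mu : Fin e → ℕ) : Type :=
  (Σ i : Fin d, Fin (lam i)) ⊕ (Σ i : Fin e, Fin (mu i))

/-- First-row entry of the concatenated matrix. -/
noncomputable def KWrow0 (k : Type) [Field k] {d e : ℕ} (lam : Fin d → ℕ) (mu : Fin e → ℕ) :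
    KWCols lam mu → MvPolynomial (KWVars lam mu) k
  | .inl ⟨i, j⟩ => X (.inl ⟨i, j.castSucc⟩)
  | .inr ⟨i, j⟩ => X (.inr ⟨i, j⟩)

/-- Second-row entry of the concatenated matrix, with eigenvalues `ε`. -/
noncomputable def KWrow1 (k : Type) [Field k] {d e : ℕ} (lam : Fin d → ℕ) (mu : Fin e → ℕ)
    (ε : Fin e → k) : KWCols lam mu → MvPolynomial (KWVars lam mu) k
  | .inl ⟨i, j⟩ => X (.inl ⟨i, j.succ⟩)
  | .inr ⟨i, j⟩ =>
      (if h : (j : ℕ) + 1 < mu i then X (.inr ⟨i, ⟨(j : ℕ) + 1, h⟩⟩) else 0)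
        + C (ε i) * X (.inr ⟨i, j⟩)

/-- The ideal of 2×2 minors of the canonical concatenation of scroll blocks of sizes
`lam` and Jordan blocks of sizes `mu` with eigenvalues `ε`. -/
noncomputable def kwIdeal (k : Type) [Field k] {d e : ℕ} (lam : Fin d → ℕ)
    (mu : Fin e → ℕ) (ε : Fin e → k) : Ideal (MvPolynomial (KWVars lam mu) k) :=
  Ideal.span {f | ∃ p q : KWCols lam mu,
    f = KWrow0 k lam mu p * KWrow1 k lam mu ε q - KWrow1 k lam mu ε p * KWrow0 k lam mu q}

/-- A homogeneous ideal `I` of `S = k[z_1,…,z_N]` has Kronecker–Weierstrass type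
`(lam; mu)` if there is a `k`-algebra isomorphism `ψ` of `S` with the polynomial ring on
the block variables, mapping linear forms bijectively onto linear forms (equivalently, a
linear automorphism of `S` followed by a relabelling of the variables by block
positions), carrying `I` to the ideal of 2×2 minors of a concatenation of scroll blocks
of sizes `lam` and Jordan blocks of sizes `mu` with pairwise distinct eigenvalues. -/
def HasKWType (k : Type) [Field k] (N : ℕ) {d e : ℕ} (lam : Fin d → ℕ) (mu : Fin e → ℕ)
    (I : Ideal (MvPolynomial (Fin N) k)) : Prop :=
  ∃ ε : Fin e → k, Function.Injective ε ∧
    ∃ ψ : MvPolynomial (Fin N) k ≃ₐ[k] MvPolynomial (KWVars lam mu) k,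
      (∀ f, f.IsHomogeneous 1 → (ψ f).IsHomogeneous 1) ∧
      (∀ g, MvPolynomial.IsHomogeneous g 1 → (ψ.symm g).IsHomogeneous 1) ∧
      Ideal.map (ψ : MvPolynomial (Fin N) k →+* MvPolynomial (KWVars lam mu) k) I
        = kwIdeal k lam mu ε

namespace KWAux

variable (k : Type) [Field k] (d e : ℕ)

/-- The substitution sending the top variable of each (size-1) scroll block `z_{i,1}` to
`z_{i,1} - δ z_{i,0}` and fixing all other variables. -/
noncomputable def shiftVar (δ : k) :
    KWVars (fun _ : Fin d => 1) (fun _ : Fin 1 => e) →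
      MvPolynomial (KWVars (fun _ : Fin d => 1) (fun _ : Fin 1 => e)) k
  | .inl ⟨i, j⟩ => X (.inl ⟨i, j⟩) - (if (j : ℕ) = 1 then C δ * X (.inl ⟨i, 0⟩) else 0)
  | .inr s => X (.inr s)

lemma shiftVar_isHomogeneous (δ : k) (s : KWVars (fun _ : Fin d => 1) (fun _ : Fin 1 => e)) :
    (shiftVar k d e δ s).IsHomogeneous 1 := by
  rcases s with ⟨i, j⟩ | s
  · refine (isHomogeneous_X _ _).sub ?_
    split_ifs
    · simpa using (isHomogeneous_X k (σ := KWVars (fun _ : Fin d => 1) (fun _ : Fin 1 => e))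
        (.inl ⟨i, 0⟩)).C_mul δ
    · exact isHomogeneous_zero _ _ _
  · exact isHomogeneous_X _ _

lemma shift_comp (δ δ' : k) :
    (aeval (shiftVar k d e δ)).comp (aeval (shiftVar k d e δ')) =
      aeval (shiftVar k d e (δ + δ')) := by
  apply MvPolynomial.algHom_ext
  rintro (⟨i, j⟩ | s)
  · rcases j with ⟨jv, hj⟩
    have hj2 : jv < 2 := hj
    interval_cases jv <;>
      simp [shiftVar, MvPolynomial.algebraMap_eq, map_add] <;> ring
  · simp [shiftVar]

lemma shift_comp_self (δ : k) :
    (aeval (shiftVar k d e δ)).comp (aeval (shiftVar k d e (-δ))) =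
      AlgHom.id k (MvPolynomial (KWVars (fun _ : Fin d => 1) (fun _ : Fin 1 => e)) k) := by
  rw [shift_comp, add_neg_cancel]
  apply MvPolynomial.algHom_ext
  rintro (⟨i, j⟩ | s) <;> simp [shiftVar]

/-- The linear change of coordinates as an algebra automorphism. -/
noncomputable def shiftEquiv (δ : k) :
    MvPolynomial (KWVars (fun _ : Fin d => 1) (fun _ : Fin 1 => e)) k ≃ₐ[k]
      MvPolynomial (KWVars (fun _ : Fin d => 1) (fun _ : Fin 1 => e)) k :=
  AlgEquiv.ofAlgHom (aeval (shiftVar k d e δ)) (aeval (shiftVar k d e (-δ)))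
    (shift_comp_self k d e δ) (by simpa using shift_comp_self k d e (-δ))

lemma shiftEquiv_apply (δ : k) (f) : shiftEquiv k d e δ f = aeval (shiftVar k d e δ) f := rfl

lemma shiftEquiv_symm_apply (δ : k) (f) :
    (shiftEquiv k d e δ).symm f = aeval (shiftVar k d e (-δ)) f := rfl

lemma shiftEquiv_isHomogeneous (δ : k) (f) (hf : f.IsHomogeneous 1) :
    (shiftEquiv k d e δ f).IsHomogeneous 1 := by
  rw [shiftEquiv_apply]
  simpa using hf.aeval _ (shiftVar_isHomogeneous k d e δ)

lemma aeval_row0 (δ : k) (p : KWCols (fun _ : Fin d => 1) (fun _ : Fin 1 => e)) :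
    aeval (shiftVar k d e δ) (KWrow0 k _ _ p) = KWrow0 k _ _ p := by
  rcases p with ⟨i, j⟩ | ⟨i, j⟩
  · have hj : (j : ℕ) = 0 := by simpa using j.isLt
    have : ((j.castSucc : Fin ((fun _ : Fin d => 1) i + 1)) : ℕ) = 0 := by
      simpa using hj
    simp [KWrow0, shiftVar, this]
  · simp [KWrow0, shiftVar]

lemma aeval_row1 (δ : k) (ε : Fin 1 → k) (p : KWCols (fun _ : Fin d => 1) (fun _ : Fin 1 => e)) :
    aeval (shiftVar k d e δ) (KWrow1 k _ _ ε p) =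
      KWrow1 k _ _ (fun i => ε i + δ) p - C δ * KWrow0 k _ _ p := by
  rcases p with ⟨i, j⟩ | ⟨i, j⟩
  · have hj : (j : ℕ) = 0 := by simpa using j.isLt
    have h1 : ((j.succ : Fin ((fun _ : Fin d => 1) i + 1)) : ℕ) = 1 := by
      simpa using hj
    have h0 : (j.castSucc : Fin ((fun _ : Fin d => 1) i + 1)) = 0 := by
      apply Fin.ext; simpa using hj
    simp [KWrow1, KWrow0, shiftVar, h1, h0]
  · simp only [KWrow1, KWrow0, map_add, map_mul, aeval_C, MvPolynomial.algebraMap_eq]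
    rw [apply_dite (aeval (shiftVar k d e δ))]
    simp only [aeval_X, map_zero, shiftVar, map_add]
    ring

lemma map_kwIdeal (δ : k) (ε : Fin 1 → k) :
    Ideal.map ((shiftEquiv k d e δ :
        MvPolynomial (KWVars (fun _ : Fin d => 1) (fun _ : Fin 1 => e)) k ≃ₐ[k] _) :
        MvPolynomial (KWVars (fun _ : Fin d => 1) (fun _ : Fin 1 => e)) k →+* _)
      (kwIdeal k (fun _ : Fin d => 1) (fun _ : Fin 1 => e) ε)
      = kwIdeal k (fun _ : Fin d => 1) (fun _ : Fin 1 => e) (fun i => ε i + δ) := by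
  unfold kwIdeal
  rw [Ideal.map_span]
  congr 1
  ext g
  constructor
  · rintro ⟨f, ⟨p, q, rfl⟩, rfl⟩
    refine ⟨p, q, ?_⟩
    show aeval (shiftVar k d e δ) _ = _
    rw [map_sub, map_mul, map_mul, aeval_row0, aeval_row0, aeval_row1, aeval_row1]
    ring
  · rintro ⟨p, q, rfl⟩
    refine ⟨KWrow0 k _ _ p * KWrow1 k _ _ ε q - KWrow1 k _ _ ε p * KWrow0 k _ _ q,
      ⟨p, q, rfl⟩, ?_⟩
    show aeval (shiftVar k d e δ) _ = _
    rw [map_sub, map_mul, map_mul, aeval_row0, aeval_row0, aeval_row1, aeval_row1]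
    ring

end KWAux

/-- **Uniqueness of the most special 2-determinantal ideal up to linear coordinate
change.**  Let `c ≥ 2`, `0 ≤ d ≤ c`, `e = c−d+1`, and let `S` be a polynomial ring over
`k` in `c+d+1` variables.  If `I` and `J` are homogeneous ideals of `S` both of KW type
`((1,…,1); (e))` (with `d` parts equal to `1` and a single part `e`), then there is a
`k`-algebra automorphism `φ` of `S` mapping the space of linear forms bijectively onto
itself such that `φ(I) = J`. -/
theorem most_special_is_single_orbit (k : Type) [Field k] [IsAlgClosed k]
    (c d : ℕ) (hc : 2 ≤ c) (hdc : d ≤ c) (e : ℕ) (he : e = c - d + 1)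
    (I J : Ideal (MvPolynomial (Fin (c + d + 1)) k))
    (hI : HasKWType k (c + d + 1) (fun _ : Fin d => 1) (fun _ : Fin 1 => e) I)
    (hJ : HasKWType k (c + d + 1) (fun _ : Fin d => 1) (fun _ : Fin 1 => e) J) :
    ∃ φ : MvPolynomial (Fin (c + d + 1)) k ≃ₐ[k] MvPolynomial (Fin (c + d + 1)) k,
      (∀ f, f.IsHomogeneous 1 → (φ f).IsHomogeneous 1) ∧
      (∀ f, f.IsHomogeneous 1 → (φ.symm f).IsHomogeneous 1) ∧
      Ideal.map (φ : MvPolynomial (Fin (c + d + 1)) k →+*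
        MvPolynomial (Fin (c + d + 1)) k) I = J := by
  obtain ⟨εI, -, ψI, hψI1, hψI2, hψI3⟩ := hI
  obtain ⟨εJ, -, ψJ, hψJ1, hψJ2, hψJ3⟩ := hJ
  set δ : k := εJ 0 - εI 0 with hδ
  have hε : (fun i => εI i + δ) = εJ := by
    funext i
    have : i = 0 := Subsingleton.elim _ _
    subst this
    simp [hδ]
  set Θ := KWAux.shiftEquiv k d e δ with hΘ
  refine ⟨ψI.trans (Θ.trans ψJ.symm), ?_, ?_, ?_⟩
  · intro f hf
    exact hψJ2 _ (KWAux.shiftEquiv_isHomogeneous k d e δ _ (hψI1 _ hf))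
  · intro f hf
    have h1 := hψJ1 _ hf
    have h2 : (Θ.symm (ψJ f)).IsHomogeneous 1 := by
      rw [hΘ, KWAux.shiftEquiv_symm_apply]
      simpa using h1.aeval _ (KWAux.shiftVar_isHomogeneous k d e (-δ))
    exact hψI2 _ h2
  · have hcomp : ((ψI.trans (Θ.trans ψJ.symm) :
        MvPolynomial (Fin (c + d + 1)) k ≃ₐ[k] MvPolynomial (Fin (c + d + 1)) k) :
        MvPolynomial (Fin (c + d + 1)) k →+* MvPolynomial (Fin (c + d + 1)) k) =
        ((ψJ.symm : MvPolynomial (KWVars (fun _ : Fin d => 1) (fun _ : Fin 1 => e)) k ≃ₐ[k]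
            MvPolynomial (Fin (c + d + 1)) k) :
          MvPolynomial (KWVars (fun _ : Fin d => 1) (fun _ : Fin 1 => e)) k →+*
            MvPolynomial (Fin (c + d + 1)) k).comp
        (((Θ : MvPolynomial (KWVars (fun _ : Fin d => 1) (fun _ : Fin 1 => e)) k ≃ₐ[k]
            MvPolynomial (KWVars (fun _ : Fin d => 1) (fun _ : Fin 1 => e)) k) :
          MvPolynomial (KWVars (fun _ : Fin d => 1) (fun _ : Fin 1 => e)) k →+*
            MvPolynomial (KWVars (fun _ : Fin d => 1) (fun _ : Fin 1 => e)) k).comp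
         ((ψI : MvPolynomial (Fin (c + d + 1)) k ≃ₐ[k]
            MvPolynomial (KWVars (fun _ : Fin d => 1) (fun _ : Fin 1 => e)) k) :
          MvPolynomial (Fin (c + d + 1)) k →+*
            MvPolynomial (KWVars (fun _ : Fin d => 1) (fun _ : Fin 1 => e)) k)) :=
      RingHom.ext fun x => rfl
    rw [hcomp, ← Ideal.map_map, ← Ideal.map_map, hψI3, hΘ, KWAux.map_kwIdeal, hε, ← hψJ3,
      Ideal.map_map]
    convert Ideal.map_id J
    exact RingHom.ext fun x => by simp
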